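/- For d ≥ 3 and every i with 0 ≤ i and 2i ≤ d+1, the simplicial complex ⋃_{k=0}^{i} Γ_k is shellable; in fact the ordering τ_0, τ_1^1, …, τ_1^d, τ_2^1, …, τ_2^d, …, τ_i^1, …, τ_i^d of its facets (by increasing j, then increasing k) is a shelling order. -/

import Mathlib

namespace SpherePaper

/-- Vertices of `∂C_d^*`: `(i, false)` plays the role of `x_i` and `(i, true)` of `y_i`,
with the cyclic index convention `x_{d+k} = x_k` built in via `ZMod d`. -/
abbrev Vtx (d : ℕ) := ZMod d × Bool

/-- The vertex `x_k`. -/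
def xv (d k : ℕ) : Vtx d := ((k : ZMod d), false)

/-- The vertex `y_k`. -/
def yv (d k : ℕ) : Vtx d := ((k : ZMod d), true)

/-- The antipodal map `α`, sending `x_k ↦ y_k` and `y_k ↦ x_k`. -/
def alphaV (d : ℕ) (v : Vtx d) : Vtx d := (v.1, !v.2)

/-- The facet `τ_j^k = {y_k, …, y_{k+j-1}} ∪ {x_{k+j}, …, x_{k+d-1}}` of `∂C_d^*`. -/
def tau (d j k : ℕ) : Finset (Vtx d) :=
  (Finset.range d).image fun t => (((k + t : ℕ) : ZMod d), decide (t < j))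

/-- The complex `Γ_j` generated by the facets `τ_j^k`, `1 ≤ k ≤ d`. -/
def Gamma (d j : ℕ) : Set (Finset (Vtx d)) :=
  {F | ∃ k, 1 ≤ k ∧ k ≤ d ∧ F ⊆ tau d j k}

/-- The `n`-th facet `σ_n` of `B(1,d)` (indices read periodically mod `2d`):
`σ_i = {x_1,…,x_i, y_{i+1},…,y_d}` and `σ_{d+i} = {y_1,…,y_i, x_{i+1},…,x_d}`
for `1 ≤ i ≤ d`. -/
def sigB (d n : ℕ) : Finset (Vtx d) :=
  if (n - 1) % (2 * d) + 1 ≤ d then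
    (Finset.range d).image fun t =>
      (((t + 1 : ℕ) : ZMod d), decide ((n - 1) % (2 * d) + 1 < t + 1))
  else
    (Finset.range d).image fun t =>
      (((t + 1 : ℕ) : ZMod d), decide (t + 1 ≤ (n - 1) % (2 * d) + 1 - d))

/-- `F` is a facet (an inclusion-maximal face) of the complex `C`. -/
def IsFacetOf {α : Type*} (C : Set (Finset α)) (F : Finset α) : Prop :=
  F ∈ C ∧ ∀ G ∈ C, F ⊆ G → F = G

lemma mem_tau {d : ℕ} [NeZero d] {j k : ℕ} {v : Vtx d} :
    v ∈ tau d j k ↔ v.2 = decide ((v.1 - (k : ZMod d)).val < j) := by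
  constructor
  · intro hv
    simp only [tau, Finset.mem_image, Finset.mem_range] at hv
    obtain ⟨t, ht, rfl⟩ := hv
    have h1 : (((k + t : ℕ) : ZMod d) - (k : ZMod d)) = (t : ℕ) := by push_cast; ring
    simp [h1, ZMod.val_natCast_of_lt ht]
  · intro hv
    simp only [tau, Finset.mem_image, Finset.mem_range]
    refine ⟨(v.1 - (k : ZMod d)).val, ZMod.val_lt _, ?_⟩
    have h1 : ((k + (v.1 - (k : ZMod d)).val : ℕ) : ZMod d) = v.1 := by
      push_cast
      rw [ZMod.natCast_zmod_val]
      ring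
    rw [h1, ← hv]

lemma yv_mem_tau {d : ℕ} [NeZero d] {j k m : ℕ} :
    yv d m ∈ tau d j k ↔ ((m : ZMod d) - (k : ZMod d)).val < j := by
  rw [mem_tau]; simp [yv]; exact ⟨of_decide_eq_true, decide_eq_true⟩

lemma tau_congr {d : ℕ} {j k k' : ℕ} (h : (k : ZMod d) = (k' : ZMod d)) :
    tau d j k = tau d j k' := by
  unfold tau
  congr 1
  funext t
  have : ((k + t : ℕ) : ZMod d) = ((k' + t : ℕ) : ZMod d) := by push_cast [h]; ring
  rw [this]

lemma tau_zero {d : ℕ} [NeZero d] (k : ℕ) : tau d 0 k = tau d 0 1 := by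
  ext v; simp [mem_tau]

lemma cast_nat_inj {d k k' : ℕ} (hk : 1 ≤ k) (hkd : k ≤ d)
    (hk' : 1 ≤ k') (hk'd : k' ≤ d) (h : (k : ZMod d) = (k' : ZMod d)) : k = k' := by
  have hm : k % d = k' % d := (ZMod.natCast_eq_natCast_iff' k k' d).1 h
  rcases eq_or_lt_of_le hkd with h1 | h1 <;> rcases eq_or_lt_of_le hk'd with h2 | h2
  · omega
  · rw [h1, Nat.mod_self, Nat.mod_eq_of_lt h2] at hm; omega
  · rw [h2, Nat.mod_self, Nat.mod_eq_of_lt h1] at hm; omega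
  · rwa [Nat.mod_eq_of_lt h1, Nat.mod_eq_of_lt h2] at hm

lemma subset_left {d : ℕ} [NeZero d] {j k : ℕ} (hj : 1 ≤ j) {G : Finset (Vtx d)}
    (hG : G ⊆ tau d j k) (hy : yv d k ∉ G) : G ⊆ tau d (j - 1) (k + 1) := by
  intro v hv
  have h1 := mem_tau.1 (hG hv)
  rw [mem_tau]
  rcases Nat.eq_zero_or_pos ((v.1 - (k : ZMod d)).val) with h0 | h0
  · exfalso
    have hv1 : v.1 = (k : ZMod d) := by
      have h2 : v.1 - (k : ZMod d) = 0 := (ZMod.val_eq_zero _).1 h0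
      linear_combination h2
    have hv2 : v.2 = true := by rw [h1, h0]; exact decide_eq_true (by omega)
    have hve : v = yv d k := Prod.ext hv1 hv2
    exact hy (hve ▸ hv)
  · have had := ZMod.val_lt (v.1 - (k : ZMod d))
    have h2 : v.1 - ((k + 1 : ℕ) : ZMod d) = (((v.1 - (k : ZMod d)).val - 1 : ℕ) : ZMod d) := by
      have hc : (((v.1 - (k : ZMod d)).val : ℕ) : ZMod d) = v.1 - (k : ZMod d) :=
        ZMod.natCast_zmod_val _
      have he : ((v.1 - (k : ZMod d)).val : ℕ) = ((v.1 - (k : ZMod d)).val - 1) + 1 := by omega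
      rw [he] at hc
      push_cast at hc ⊢
      linear_combination -hc
    rw [h2, ZMod.val_natCast_of_lt (by omega), h1]
    exact decide_eq_decide.2 (by omega)

lemma subset_right {d : ℕ} [NeZero d] {j k : ℕ} (hj : 1 ≤ j) {G : Finset (Vtx d)}
    (hG : G ⊆ tau d j k) (hy : yv d (k + j - 1) ∉ G) : G ⊆ tau d (j - 1) k := by
  intro v hv
  have h1 := mem_tau.1 (hG hv)
  rw [mem_tau]
  by_cases h0 : (v.1 - (k : ZMod d)).val = j - 1
  · exfalso
    have hv1 : v.1 = ((k + j - 1 : ℕ) : ZMod d) := by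
      have hc : (((v.1 - (k : ZMod d)).val : ℕ) : ZMod d) = v.1 - (k : ZMod d) :=
        ZMod.natCast_zmod_val _
      rw [h0] at hc
      have he : (k + j - 1 : ℕ) = k + (j - 1) := by omega
      rw [he]
      push_cast at hc ⊢
      linear_combination -hc
    have hv2 : v.2 = true := by rw [h1]; exact decide_eq_true (by omega)
    have hve : v = yv d (k + j - 1) := Prod.ext hv1 hv2
    exact hy (hve ▸ hv)
  · rw [h1]
    exact decide_eq_decide.2 (by omega)

lemma endpoints {d i j k j' k' : ℕ} [NeZero d] (hi : 2 * i ≤ d + 1)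
    (hj : 1 ≤ j) (hji : j ≤ i) (hj'i : j' ≤ i)
    (h1 : yv d k ∈ tau d j' k') (h2 : yv d (k + j - 1) ∈ tau d j' k') :
    ((k : ZMod d) - (k' : ZMod d)).val + (j - 1) < j' := by
  have hu := yv_mem_tau.1 h1
  have hw := yv_mem_tau.1 h2
  have hlt : ((k : ZMod d) - (k' : ZMod d)).val + (j - 1) < d := by omega
  have hcast : ((k + j - 1 : ℕ) : ZMod d) - (k' : ZMod d) =
      ((((k : ZMod d) - (k' : ZMod d)).val + (j - 1) : ℕ) : ZMod d) := by
    have hc : ((((k : ZMod d) - (k' : ZMod d)).val : ℕ) : ZMod d) =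
        (k : ZMod d) - (k' : ZMod d) := ZMod.natCast_zmod_val _
    have he : (k + j - 1 : ℕ) = k + (j - 1) := by omega
    rw [he]
    push_cast
    rw [hc]
    ring
  rw [hcast, ZMod.val_natCast_of_lt hlt] at hw
  exact hw

lemma idx_lt {d j k j' k' : ℕ} (hk : 1 ≤ k) (hkd : k ≤ d) (hk' : 1 ≤ k') (hk'd : k' ≤ d)
    (hj : 1 ≤ j) (hj' : 1 ≤ j') (h : (j' - 1) * d + k' < (j - 1) * d + k) :
    j' < j ∨ (j' = j ∧ k' < k) := by
  rcases lt_trichotomy j' j with h1 | h1 | h1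
  · exact Or.inl h1
  · subst h1; omega
  · exfalso
    have h2 : j * d ≤ (j' - 1) * d := Nat.mul_le_mul_right d (by omega)
    have h3 : (j - 1) * d + d = j * d := by
      have hj1 : j = (j - 1) + 1 := by omega
      nth_rewrite 2 [hj1]
      rw [Nat.succ_mul]
    omega

lemma yv_self_mem {d : ℕ} [NeZero d] {j k : ℕ} (hj : 1 ≤ j) : yv d k ∈ tau d j k :=
  yv_mem_tau.2 (by rw [sub_self, ZMod.val_zero]; omega)

lemma yv_last_mem {d : ℕ} [NeZero d] {j k : ℕ} (hj : 1 ≤ j) (hjd : j ≤ d) :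
    yv d (k + j - 1) ∈ tau d j k := by
  rw [yv_mem_tau]
  have he : (k + j - 1 : ℕ) = k + (j - 1) := by omega
  have h2 : ((k + (j - 1) : ℕ) : ZMod d) - (k : ZMod d) = ((j - 1 : ℕ) : ZMod d) := by
    push_cast; ring
  rw [he, h2, ZMod.val_natCast_of_lt (by omega)]
  omega

/-- For `d ≥ 3` and `0 ≤ i` with `2i ≤ d+1`, the complex `⋃_{k=0}^{i} Γ_k`
is shellable; in fact the ordering `τ_0, τ_1^1, …, τ_1^d, τ_2^1, …, τ_2^d, …, τ_i^1, …, τ_i^d`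
of its facets (by increasing `j`, then increasing `k`) is a shelling order.
The enumeration is encoded by `F : ℕ → Finset (Vtx d)` with `F 0 = τ_0` and
`F ((j-1)d + k) = τ_j^k`. -/
theorem statement1 (d i : ℕ) (hd : 3 ≤ d) (hi : 2 * i ≤ d + 1)
    (F : ℕ → Finset (Vtx d))
    (hF0 : F 0 = tau d 0 1)
    (hFjk : ∀ j k, 1 ≤ j → j ≤ i → 1 ≤ k → k ≤ d → F ((j - 1) * d + k) = tau d j k) :
    -- the listed facets generate exactly the complex `⋃_{k=0}^{i} Γ_k`,
    (({G | ∃ k ≤ i, G ∈ Gamma d k} : Set (Finset (Vtx d))) =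
        {G | ∃ n ≤ i * d, G ⊆ F n}) ∧
    -- they are listed without repetition,
    (∀ a b, a ≤ i * d → b ≤ i * d → F a = F b → a = b) ∧
    -- and the listed ordering satisfies the shelling condition.
    (∀ n, 1 ≤ n → n ≤ i * d →
      ∃ r : Finset (Vtx d), r ⊆ F n ∧
        ∀ G : Finset (Vtx d),
          (G ⊆ F n ∧ ∀ l < n, ¬ G ⊆ F l) ↔ (r ⊆ G ∧ G ⊆ F n)) := by
  haveI : NeZero d := ⟨by omega⟩
  have hd0 : 0 < d := by omega
  -- decomposition of indices
  have hdec : ∀ n, 1 ≤ n → n ≤ i * d →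
      ∃ j k, 1 ≤ j ∧ j ≤ i ∧ 1 ≤ k ∧ k ≤ d ∧ n = (j - 1) * d + k := by
    intro n h1 h2
    obtain ⟨q, r, hqr, hrd⟩ : ∃ q r, d * q + r = n - 1 ∧ r < d :=
      ⟨(n - 1) / d, (n - 1) % d, Nat.div_add_mod _ _, Nat.mod_lt _ hd0⟩
    have hqi : q + 1 ≤ i := by
      by_contra h
      push_neg at h
      have h3 : d * i ≤ d * q := Nat.mul_le_mul_left d (by omega)
      have h4 : i * d = d * i := Nat.mul_comm i d
      omega
    refine ⟨q + 1, r + 1, by omega, hqi, by omega, by omega, ?_⟩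
    have h5 : (q + 1 - 1) * d = d * q := by rw [Nat.mul_comm]; congr 1
    omega
  -- bound for listed indices
  have hbound : ∀ j k, 1 ≤ j → j ≤ i → 1 ≤ k → k ≤ d → (j - 1) * d + k ≤ i * d := by
    intro j k hj hji hk1 hkd
    have h2 : (j - 1) * d ≤ (i - 1) * d := Nat.mul_le_mul_right d (by omega)
    have h3 : (i - 1) * d + d = i * d := by
      have hi1 : i = (i - 1) + 1 := by omega
      nth_rewrite 2 [hi1]
      rw [Nat.succ_mul]
    omega
  refine ⟨?_, ?_, ?_⟩
  · -- part 1
    ext G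
    simp only [Set.mem_setOf_eq, Gamma]
    constructor
    · rintro ⟨j, hji, k, hk1, hkd, hGk⟩
      rcases Nat.eq_zero_or_pos j with rfl | hj
      · exact ⟨0, Nat.zero_le _, by rw [hF0, ← tau_zero k]; exact hGk⟩
      · refine ⟨(j - 1) * d + k, hbound j k hj hji hk1 hkd, ?_⟩
        rw [hFjk j k hj hji hk1 hkd]
        exact hGk
    · rintro ⟨n, hn, hGn⟩
      rcases Nat.eq_zero_or_pos n with rfl | hn1
      · rw [hF0] at hGn
        exact ⟨0, Nat.zero_le _, 1, le_refl 1, by omega, hGn⟩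
      · obtain ⟨j, k, hj, hji, hk1, hkd, rfl⟩ := hdec n hn1 hn
        rw [hFjk j k hj hji hk1 hkd] at hGn
        exact ⟨j, hji, k, hk1, hkd, hGn⟩
  · -- part 2: injectivity
    intro a b ha hb hab
    rcases Nat.eq_zero_or_pos a with rfl | ha1 <;> rcases Nat.eq_zero_or_pos b with rfl | hb1
    · rfl
    · exfalso
      obtain ⟨j, k, hj, hji, hk1, hkd, hbe⟩ := hdec b hb1 hb
      rw [hbe, hFjk j k hj hji hk1 hkd] at hab
      rw [hF0] at hab
      have h1 : yv d k ∈ tau d 0 1 := hab ▸ yv_self_mem hj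
      have := yv_mem_tau.1 h1
      omega
    · exfalso
      obtain ⟨j, k, hj, hji, hk1, hkd, hae⟩ := hdec a ha1 ha
      rw [hae, hFjk j k hj hji hk1 hkd] at hab
      rw [hF0] at hab
      have h1 : yv d k ∈ tau d 0 1 := hab ▸ yv_self_mem hj
      have := yv_mem_tau.1 h1
      omega
    · obtain ⟨j, k, hj, hji, hk1, hkd, hae⟩ := hdec a ha1 ha
      obtain ⟨j', k', hj', hj'i, hk'1, hk'd, hbe⟩ := hdec b hb1 hb
      rw [hae, hFjk j k hj hji hk1 hkd, hbe, hFjk j' k' hj' hj'i hk'1 hk'd] at hab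
      have e1 : yv d k ∈ tau d j' k' := hab ▸ yv_self_mem hj
      have e2 : yv d (k + j - 1) ∈ tau d j' k' := hab ▸ yv_last_mem hj (by omega)
      have e1' : yv d k' ∈ tau d j k := hab ▸ yv_self_mem hj'
      have e2' : yv d (k' + j' - 1) ∈ tau d j k := hab ▸ yv_last_mem hj' (by omega)
      have hE1 := endpoints hi hj hji hj'i e1 e2
      have hE2 := endpoints hi hj' hj'i hji e1' e2'
      have hsum : ((k : ZMod d) - (k' : ZMod d)).val + ((k' : ZMod d) - (k : ZMod d)).val = 0 := by
        have hc1 : ((((k : ZMod d) - (k' : ZMod d)).val : ℕ) : ZMod d) =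
            (k : ZMod d) - (k' : ZMod d) := ZMod.natCast_zmod_val _
        have hc2 : ((((k' : ZMod d) - (k : ZMod d)).val : ℕ) : ZMod d) =
            (k' : ZMod d) - (k : ZMod d) := ZMod.natCast_zmod_val _
        have hz : ((((k : ZMod d) - (k' : ZMod d)).val +
            ((k' : ZMod d) - (k : ZMod d)).val : ℕ) : ZMod d) = 0 := by
          push_cast
          rw [hc1, hc2]
          ring
        have hdvd : d ∣ (((k : ZMod d) - (k' : ZMod d)).val +
            ((k' : ZMod d) - (k : ZMod d)).val) := (ZMod.natCast_eq_zero_iff _ _).1 hz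
        exact Nat.eq_zero_of_dvd_of_lt hdvd (by omega)
      have hjj : j = j' := by omega
      have hkk : k = k' := by
        have hu0 : ((k : ZMod d) - (k' : ZMod d)).val = 0 := by omega
        have hz : (k : ZMod d) - (k' : ZMod d) = 0 := (ZMod.val_eq_zero _).1 hu0
        exact cast_nat_inj hk1 hkd hk'1 hk'd (by linear_combination hz)
      subst hjj; subst hkk; omega
  · -- part 3: shelling
    intro n hn1 hn
    obtain ⟨j, k, hj, hji, hk1, hkd, hneq⟩ := hdec n hn1 hn
    have hFn : F n = tau d j k := by rw [hneq]; exact hFjk j k hj hji hk1 hkd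
    refine ⟨{yv d k, yv d (k + j - 1)}, ?_, ?_⟩
    · rw [hFn]
      rw [Finset.insert_subset_iff, Finset.singleton_subset_iff]
      exact ⟨yv_self_mem hj, yv_last_mem hj (by omega)⟩
    · intro G
      constructor
      · rintro ⟨hGn, hnew⟩
        refine ⟨?_, hGn⟩
        rw [hFn] at hGn
        have hyk : yv d k ∈ G := by
          by_contra hyk
          have hsub := subset_left hj hGn hyk
          rcases eq_or_lt_of_le hj with hj1 | hj2
          · refine hnew 0 (by omega) ?_
            rw [hF0, ← tau_zero (k + 1)]
            rw [← hj1] at hsub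
            exact hsub
          · set k'' := if k = d then 1 else k + 1 with hk''
            have hk''r : 1 ≤ k'' ∧ k'' ≤ d := by rw [hk'']; split <;> omega
            have hcast : ((k + 1 : ℕ) : ZMod d) = (k'' : ZMod d) := by
              rw [hk'']
              split
              · rename_i hkeq
                subst hkeq
                push_cast
                simp [ZMod.natCast_self]
              · rfl
            have hsub2 : G ⊆ tau d (j - 1) k'' := by rwa [tau_congr hcast] at hsub
            refine hnew ((j - 1 - 1) * d + k'') ?_ ?_
            · have hmm : (j - 1 - 1) * d + d = (j - 1) * d := by
                have hj1 : j - 1 = (j - 1 - 1) + 1 := by omega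
                nth_rewrite 2 [hj1]
                rw [Nat.succ_mul]
              omega
            · rw [hFjk (j - 1) k'' (by omega) (by omega) hk''r.1 hk''r.2]
              exact hsub2
        have hyk2 : yv d (k + j - 1) ∈ G := by
          by_contra hyk2
          have hsub := subset_right hj hGn hyk2
          rcases eq_or_lt_of_le hj with hj1 | hj2
          · refine hnew 0 (by omega) ?_
            rw [hF0, ← tau_zero k]
            rw [← hj1] at hsub
            exact hsub
          · refine hnew ((j - 1 - 1) * d + k) ?_ ?_
            · have hmm : (j - 1 - 1) * d + d = (j - 1) * d := by
                have hj1 : j - 1 = (j - 1 - 1) + 1 := by omega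
                nth_rewrite 2 [hj1]
                rw [Nat.succ_mul]
              omega
            · rw [hFjk (j - 1) k (by omega) (by omega) hk1 hkd]
              exact hsub
        rw [Finset.insert_subset_iff, Finset.singleton_subset_iff]
        exact ⟨hyk, hyk2⟩
      · rintro ⟨hrG, hGn⟩
        refine ⟨hGn, ?_⟩
        intro l hl hGl
        have hyk : yv d k ∈ G := hrG (by simp)
        have hyk2 : yv d (k + j - 1) ∈ G := hrG (by simp)
        rcases Nat.eq_zero_or_pos l with rfl | hl1
        · rw [hF0] at hGl
          have := yv_mem_tau.1 (hGl hyk)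
          omega
        · obtain ⟨j', k', hj', hj'i, hk'1, hk'd, hleq⟩ := hdec l hl1 (by omega)
          rw [hleq, hFjk j' k' hj' hj'i hk'1 hk'd] at hGl
          have e1 := hGl hyk
          have e2 := hGl hyk2
          have hE := endpoints hi hj hji hj'i e1 e2
          have hcomp := idx_lt hk1 hkd hk'1 hk'd hj hj' (by omega)
          rcases hcomp with h | ⟨rfl, hkk⟩
          · omega
          · have hu0 : ((k : ZMod d) - (k' : ZMod d)).val = 0 := by omega
            have hz : (k : ZMod d) - (k' : ZMod d) = 0 := (ZMod.val_eq_zero _).1 hu0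
            have := cast_nat_inj hk1 hkd hk'1 hk'd (by linear_combination hz)
            omega


end SpherePaper
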